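/- Let (d_i)_{i<k} be real numbers d_i = d(d_k, d_i) from a finite metric space M = {d_1,…,d_k}, and v_1,…,v_{k−1} points in a metric space with |d(v_i, v_j) − d_M(d_i, d_j)| < 1/2^{l+k+1} for all i,j < k. Choose a permutation i_1,…,i_{k−1} of {1,…,k−1} with d_M(d_k, d_{i_1}) ≥ … ≥ d_M(d_k, d_{i_{k−1}}), and reals η_j with d_M(d_k, d_{i_j}) + (2j−1)/(k·2^{l+1}) ≤ η_j ≤ d_M(d_k, d_{i_j}) + 2j/(k·2^{l+1}). Then for all i < j < k: η_i − η_j ≤ d(v_{i_i}, v_{i_j}) ≤ η_i + η_j; i.e., the assignment of distance η_j from a new point to v_{i_j} satisfies all triangle inequalities. -/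

import Mathlib

theorem lemma_one_point_triangle_inequalities {M V : Type*} [MetricSpace M] [MetricSpace V]
    (m l : ℕ) (hm : 1 ≤ m) (hl : 1 ≤ l)
    (p : M) (q : Fin m → M) (v : Fin m → V)
    (hv : ∀ i j : Fin m,
      |dist (v i) (v j) - dist (q i) (q j)| < 1 / 2 ^ (l + m + 2))
    (σ : Equiv.Perm (Fin m))
    (hσ : ∀ i j : Fin m, i ≤ j → dist p (q (σ j)) ≤ dist p (q (σ i)))
    (η : Fin m → ℝ)
    (hη : ∀ j : Fin m,
      dist p (q (σ j)) + (2 * (j : ℕ) + 1) / ((m + 1) * 2 ^ (l + 1)) ≤ η j ∧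
      η j ≤ dist p (q (σ j)) + (2 * (j : ℕ) + 2) / ((m + 1) * 2 ^ (l + 1))) :
    ∀ i j : Fin m, i < j →
      η i - η j ≤ dist (v (σ i)) (v (σ j)) ∧
      dist (v (σ i)) (v (σ j)) ≤ η i + η j := by
  intro i j hij
  set D : ℝ := ((m : ℝ) + 1) * 2 ^ (l + 1) with hD
  have hDpos : 0 < D := by positivity
  have hij' : ((i : ℕ) : ℝ) + 1 ≤ ((j : ℕ) : ℝ) := by
    have h : (i : ℕ) < (j : ℕ) := hij
    exact_mod_cast Nat.succ_le_of_lt h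
  have hkey : (1 : ℝ) / 2 ^ (l + m + 2) ≤ 1 / D := by
    apply one_div_le_one_div_of_le hDpos
    rw [hD]
    have h2 : (2 : ℝ) ^ (l + m + 2) = 2 ^ (l + 1) * 2 ^ (m + 1) := by
      rw [← pow_add]; ring_nf
    have h1 : (m : ℝ) + 1 ≤ 2 ^ (m + 1) := by
      exact_mod_cast (Nat.lt_two_pow_self (n := m + 1)).le
    rw [h2]
    nlinarith [pow_pos (by norm_num : (0:ℝ) < 2) (l + 1)]
  obtain ⟨hηi1, hηi2⟩ := hη i
  obtain ⟨hηj1, hηj2⟩ := hη j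
  push_cast at hηi1 hηi2 hηj1 hηj2
  have hvij := hv (σ i) (σ j)
  rw [abs_lt] at hvij
  obtain ⟨hv1, hv2⟩ := hvij
  have htri1 : dist p (q (σ i)) - dist p (q (σ j)) ≤ dist (q (σ i)) (q (σ j)) := by
    have h := abs_dist_sub_le (q (σ i)) (q (σ j)) p
    rw [dist_comm (q (σ i)) p, dist_comm (q (σ j)) p] at h
    exact (le_abs_self _).trans h
  have htri2 : dist (q (σ i)) (q (σ j)) ≤ dist p (q (σ i)) + dist p (q (σ j)) := by
    have h := dist_triangle (q (σ i)) p (q (σ j))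
    rw [dist_comm (q (σ i)) p] at h
    linarith
  have F1 : (2 * ((i : ℕ) : ℝ) + 2) / D ≤ (2 * ((j : ℕ) : ℝ) + 1) / D - 1 / D := by
    rw [div_sub_div_same]
    exact (div_le_div_iff_of_pos_right hDpos).mpr (by linarith)
  have F2 : (1 : ℝ) / D ≤ (2 * ((i : ℕ) : ℝ) + 1) / D := by
    apply (div_le_div_iff_of_pos_right hDpos).mpr
    have : (0 : ℝ) ≤ ((i : ℕ) : ℝ) := Nat.cast_nonneg _
    linarith
  have F3 : (1 : ℝ) / D ≤ (2 * ((j : ℕ) : ℝ) + 1) / D := by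
    apply (div_le_div_iff_of_pos_right hDpos).mpr
    have : (0 : ℝ) ≤ ((j : ℕ) : ℝ) := Nat.cast_nonneg _
    linarith
  have hDinv : 0 < 1 / D := by positivity
  constructor <;> linarith
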